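/- Let P be a poset and let U and V be lower sets (sieves) of P, each equipped with the induced ordering. Then the commutative square of inclusion functors U∩V → U, U∩V → V, U → U∪V, V → U∪V is a pushout square in the category of small categories (equivalently, in the category of posets and monotone maps). -/

import Mathlib

open CategoryTheory

open CategoryTheory.Limits


section Aux

instance homSubsingleton {A : Type} [Preorder A] (a b : A) : Subsingleton (a ⟶ b) :=
  ⟨fun ⟨⟨_⟩⟩ ⟨⟨_⟩⟩ => rfl⟩

lemma pmap_eq_id {A : Type} [Preorder A] {D : Type} [Category.{0} D] (H : A ⥤ D)
    {a b : A} (f : a ⟶ b) (e : a = b) : H.map f = eqToHom (congrArg H.obj e) := by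
  subst e; rw [Subsingleton.elim f (𝟙 a)]; simp

lemma pmap_comp {A : Type} [Preorder A] {D : Type} [Category.{0} D] (H : A ⥤ D)
    {a b c : A} (f : a ⟶ b) (g : b ⟶ c) (h : a ⟶ c) :
    H.map h = H.map f ≫ H.map g := by
  rw [Subsingleton.elim h (f ≫ g), H.map_comp]

lemma eqToHom_sandwich {D : Type} [Category.{0} D] {X Y Z1 W1 W2 : D} (g : X ⟶ Y)
    (e1 : X = Z1) (e2 : Z1 = X) (e3 : Y = W1) (e4 : W1 = W2) (e5 : W2 = Y) :
    g = eqToHom e1 ≫ eqToHom e2 ≫ (g ≫ eqToHom e3) ≫ eqToHom e4 ≫ eqToHom e5 := by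
  subst e1 e3 e4; simp

variable {P : Type} [PartialOrder P] {U V : Set P}
variable {C : Type} [Category.{0} C] (F : ↥U ⥤ C) (G : ↥V ⥤ C)

open Classical in
noncomputable def descObj (x : ↥(U ∪ V)) : C :=
  if h : x.1 ∈ U then F.obj ⟨x.1, h⟩ else G.obj ⟨x.1, x.2.resolve_left h⟩

variable (hobj : ∀ (x : P) (hu : x ∈ U) (hv : x ∈ V), F.obj ⟨x, hu⟩ = G.obj ⟨x, hv⟩)

lemma descObj_F (x : ↥(U ∪ V)) (hx : x.1 ∈ U) : descObj F G x = F.obj ⟨x.1, hx⟩ := dif_pos hx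

include hobj in
lemma descObj_G (x : ↥(U ∪ V)) (hx : x.1 ∈ V) : descObj F G x = G.obj ⟨x.1, hx⟩ := by
  unfold descObj
  split
  · exact hobj x.1 ‹_› hx
  · rfl

variable (hU : IsLowerSet U) (hV : IsLowerSet V)

open Classical in
noncomputable def descMap (x y : ↥(U ∪ V)) (h : x.1 ≤ y.1) :
    descObj F G x ⟶ descObj F G y :=
  if hy : y.1 ∈ U then
    eqToHom (descObj_F F G x (hU h hy)) ≫
      F.map (homOfLE h : (⟨x.1, hU h hy⟩ : ↥U) ⟶ ⟨y.1, hy⟩) ≫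
      eqToHom (descObj_F F G y hy).symm
  else
    eqToHom (descObj_G F G hobj x (hV h (y.2.resolve_left hy))) ≫
      G.map (homOfLE h : (⟨x.1, hV h (y.2.resolve_left hy)⟩ : ↥V) ⟶ ⟨y.1, y.2.resolve_left hy⟩) ≫
      eqToHom (descObj_G F G hobj y (y.2.resolve_left hy)).symm

variable (hmap : ∀ (x y : P) (h : x ≤ y) (hxu : x ∈ U) (hyu : y ∈ U) (hxv : x ∈ V) (hyv : y ∈ V),
  F.map (homOfLE h : (⟨x, hxu⟩ : ↥U) ⟶ ⟨y, hyu⟩) =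
    eqToHom (hobj x hxu hxv) ≫ G.map (homOfLE h : (⟨x, hxv⟩ : ↥V) ⟶ ⟨y, hyv⟩) ≫
      eqToHom (hobj y hyu hyv).symm)

noncomputable def descFunctor : ↥(U ∪ V) ⥤ C where
  obj := descObj F G
  map {x y} f := descMap F G hobj hU hV x y (leOfHom f)
  map_id x := by
    show descMap F G hobj hU hV x x _ = 𝟙 (descObj F G x)
    unfold descMap
    split
    · rw [pmap_eq_id F _ (Subtype.ext rfl)]; simp
    · rw [pmap_eq_id G _ (Subtype.ext rfl)]; simp
  map_comp {x y z} f g := by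
    have hf : x.1 ≤ y.1 := leOfHom f
    have hg : y.1 ≤ z.1 := leOfHom g
    show descMap F G hobj hU hV x z _ =
      descMap F G hobj hU hV x y _ ≫ descMap F G hobj hU hV y z _
    unfold descMap
    by_cases hz : z.1 ∈ U
    · have hy : y.1 ∈ U := hU hg hz
      rw [dif_pos hz, dif_pos hz, dif_pos hy]
      rw [pmap_comp F (homOfLE hf : (⟨x.1, hU hf hy⟩ : ↥U) ⟶ ⟨y.1, hy⟩)
        (homOfLE hg) (homOfLE (hf.trans hg))]
      simp
    · have hzV : z.1 ∈ V := z.2.resolve_left hz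
      have hyV : y.1 ∈ V := hV hg hzV
      have hxV : x.1 ∈ V := hV hf hyV
      rw [dif_neg hz, dif_neg hz]
      by_cases hy : y.1 ∈ U
      · rw [dif_pos hy]
        have hxU : x.1 ∈ U := hU hf hy
        rw [hmap x.1 y.1 hf hxU hy hxV hyV]
        rw [pmap_comp G (homOfLE hf : (⟨x.1, hxV⟩ : ↥V) ⟶ ⟨y.1, hyV⟩)
          (homOfLE hg) (homOfLE (hf.trans hg))]
        simp
      · rw [dif_neg hy]
        rw [pmap_comp G (homOfLE hf : (⟨x.1, hxV⟩ : ↥V) ⟶ ⟨y.1, hyV⟩)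
          (homOfLE hg) (homOfLE (hf.trans hg))]
        simp

end Aux

section Fac

variable {P : Type} [PartialOrder P] {U V : Set P}
variable {C : Type} [Category.{0} C] (F : ↥U ⥤ C) (G : ↥V ⥤ C)
variable (hobj : ∀ (x : P) (hu : x ∈ U) (hv : x ∈ V), F.obj ⟨x, hu⟩ = G.obj ⟨x, hv⟩)
variable (hU : IsLowerSet U) (hV : IsLowerSet V)
variable (hmap : ∀ (x y : P) (h : x ≤ y) (hxu : x ∈ U) (hyu : y ∈ U) (hxv : x ∈ V) (hyv : y ∈ V),
  F.map (homOfLE h : (⟨x, hxu⟩ : ↥U) ⟶ ⟨y, hyu⟩) =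
    eqToHom (hobj x hxu hxv) ≫ G.map (homOfLE h : (⟨x, hxv⟩ : ↥V) ⟶ ⟨y, hyv⟩) ≫
      eqToHom (hobj y hyu hyv).symm)

lemma desc_fac_left :
    Monotone.functor (f := fun x : ↥U => (⟨x.1, Or.inl x.2⟩ : ↥(U ∪ V))) (fun _ _ h => h) ⋙
      descFunctor F G hobj hU hV hmap = F := by
  apply CategoryTheory.Functor.ext
  · intro x y f
    show descMap F G hobj hU hV ⟨x.1, Or.inl x.2⟩ ⟨y.1, Or.inl y.2⟩ _ = _
    unfold descMap
    rw [dif_pos y.2]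
    have : F.map (homOfLE (leOfHom f) :
        (⟨x.1, hU (leOfHom f) y.2⟩ : ↥U) ⟶ ⟨y.1, y.2⟩) = F.map f :=
      congrArg F.map (Subsingleton.elim _ _)
    rw [this]
    rfl
  · intro x
    exact descObj_F F G ⟨x.1, Or.inl x.2⟩ x.2

lemma desc_fac_right :
    Monotone.functor (f := fun x : ↥V => (⟨x.1, Or.inr x.2⟩ : ↥(U ∪ V))) (fun _ _ h => h) ⋙
      descFunctor F G hobj hU hV hmap = G := by
  apply CategoryTheory.Functor.ext
  · intro x y f
    show descMap F G hobj hU hV ⟨x.1, Or.inr x.2⟩ ⟨y.1, Or.inr y.2⟩ _ = _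
    unfold descMap
    by_cases hy : y.1 ∈ U
    · rw [dif_pos hy]
      rw [hmap x.1 y.1 (leOfHom f) (hU (leOfHom f) hy) hy (hV (leOfHom f) y.2) y.2]
      have : G.map (homOfLE (leOfHom f) :
          (⟨x.1, hV (leOfHom f) y.2⟩ : ↥V) ⟶ ⟨y.1, y.2⟩) = G.map f :=
        congrArg G.map (Subsingleton.elim _ _)
      rw [this]
      simp
      rfl
    · rw [dif_neg hy]
      have : G.map (homOfLE (leOfHom f) :
          (⟨x.1, hV (leOfHom f) ((Or.inr y.2 : y.1 ∈ U ∪ V).resolve_left hy)⟩ : ↥V) ⟶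
            ⟨y.1, (Or.inr y.2 : y.1 ∈ U ∪ V).resolve_left hy⟩) = G.map f :=
        congrArg G.map (Subsingleton.elim _ _)
      rw [this]
      rfl
  · intro x
    exact descObj_G F G hobj ⟨x.1, Or.inr x.2⟩ x.2

lemma desc_uniq (m : ↥(U ∪ V) ⥤ C)
    (h₁ : Monotone.functor (f := fun x : ↥U => (⟨x.1, Or.inl x.2⟩ : ↥(U ∪ V))) (fun _ _ h => h) ⋙
      m = F)
    (h₂ : Monotone.functor (f := fun x : ↥V => (⟨x.1, Or.inr x.2⟩ : ↥(U ∪ V))) (fun _ _ h => h) ⋙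
      m = G) :
    m = descFunctor F G hobj hU hV hmap := by
  apply CategoryTheory.Functor.ext
  · intro x y f
    show m.map f = eqToHom _ ≫ descMap F G hobj hU hV x y _ ≫ eqToHom _
    unfold descMap
    by_cases hy : y.1 ∈ U
    · rw [dif_pos hy]
      have hx : x.1 ∈ U := hU (leOfHom f) hy
      have := Functor.congr_hom h₁.symm
        (homOfLE (leOfHom f) : (⟨x.1, hx⟩ : ↥U) ⟶ ⟨y.1, hy⟩)
      rw [this]
      have : m.map ((Monotone.functor (f := fun x : ↥U => (⟨x.1, Or.inl x.2⟩ : ↥(U ∪ V)))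
          (fun _ _ h => h)).map (homOfLE (leOfHom f) : (⟨x.1, hx⟩ : ↥U) ⟶ ⟨y.1, hy⟩)) =
          m.map f := congrArg m.map (Subsingleton.elim _ _)
      simp [Functor.comp_map, this]
      exact eqToHom_sandwich _ _ _ _ _ _
    · rw [dif_neg hy]
      have hyV : y.1 ∈ V := y.2.resolve_left hy
      have hxV : x.1 ∈ V := hV (leOfHom f) hyV
      have := Functor.congr_hom h₂.symm
        (homOfLE (leOfHom f) : (⟨x.1, hxV⟩ : ↥V) ⟶ ⟨y.1, hyV⟩)
      rw [this]
      have : m.map ((Monotone.functor (f := fun x : ↥V => (⟨x.1, Or.inr x.2⟩ : ↥(U ∪ V)))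
          (fun _ _ h => h)).map (homOfLE (leOfHom f) : (⟨x.1, hxV⟩ : ↥V) ⟶ ⟨y.1, hyV⟩)) =
          m.map f := congrArg m.map (Subsingleton.elim _ _)
      simp [Functor.comp_map, this]
      exact eqToHom_sandwich _ _ _ _ _ _
  · intro x
    show m.obj x = descObj F G x
    rcases x.2 with hx | hx
    · rw [descObj_F F G x hx]
      exact Functor.congr_obj h₁ ⟨x.1, hx⟩
    · rw [descObj_G F G hobj x hx]
      exact Functor.congr_obj h₂ ⟨x.1, hx⟩

end Fac


/-- for sieves (lower sets) U, V of a poset P, the square of inclusion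
functors U∩V → U, U∩V → V, U → U∪V, V → U∪V is a pushout in the category Cat of
small categories. -/
theorem sieve_union_isPushout_in_Cat {P : Type} [PartialOrder P]
    (U V : Set P) (hU : IsLowerSet U) (hV : IsLowerSet V) :
    let i₁ : ↥(U ∩ V) ⥤ ↥U :=
      Monotone.functor (f := fun x : ↥(U ∩ V) => (⟨x.1, x.2.1⟩ : ↥U)) (fun _ _ h => h)
    let i₂ : ↥(U ∩ V) ⥤ ↥V :=
      Monotone.functor (f := fun x : ↥(U ∩ V) => (⟨x.1, x.2.2⟩ : ↥V)) (fun _ _ h => h)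
    let j₁ : ↥U ⥤ ↥(U ∪ V) :=
      Monotone.functor (f := fun x : ↥U => (⟨x.1, Or.inl x.2⟩ : ↥(U ∪ V))) (fun _ _ h => h)
    let j₂ : ↥V ⥤ ↥(U ∪ V) :=
      Monotone.functor (f := fun x : ↥V => (⟨x.1, Or.inr x.2⟩ : ↥(U ∪ V))) (fun _ _ h => h)
    IsPushout (C := Cat.{0, 0})
      (show Cat.of ↥(U ∩ V) ⟶ Cat.of ↥U from i₁.toCatHom)
      (show Cat.of ↥(U ∩ V) ⟶ Cat.of ↥V from i₂.toCatHom)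
      (show Cat.of ↥U ⟶ Cat.of ↥(U ∪ V) from j₁.toCatHom)
      (show Cat.of ↥V ⟶ Cat.of ↥(U ∪ V) from j₂.toCatHom) := by
  intro i₁ i₂ j₁ j₂
  have eq : (show Cat.of ↥(U ∩ V) ⟶ Cat.of ↥U from i₁.toCatHom) ≫
        (show Cat.of ↥U ⟶ Cat.of ↥(U ∪ V) from j₁.toCatHom) =
      (show Cat.of ↥(U ∩ V) ⟶ Cat.of ↥V from i₂.toCatHom) ≫
        (show Cat.of ↥V ⟶ Cat.of ↥(U ∪ V) from j₂.toCatHom) := by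
    apply Cat.ext
    apply CategoryTheory.Functor.ext
    · intro x y f
      exact (homSubsingleton (A := ↥(U ∪ V)) _ _).elim _ _
    · intro x
      rfl
  have hobj : ∀ (s : PushoutCocone (show Cat.of ↥(U ∩ V) ⟶ Cat.of ↥U from i₁.toCatHom)
      (show Cat.of ↥(U ∩ V) ⟶ Cat.of ↥V from i₂.toCatHom)) (x : P) (hu : x ∈ U) (hv : x ∈ V),
      s.inl.toFunctor.obj ⟨x, hu⟩ = s.inr.toFunctor.obj ⟨x, hv⟩ :=
    fun s x hu hv => Functor.congr_obj (congrArg Cat.Hom.toFunctor s.condition) ⟨x, ⟨hu, hv⟩⟩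
  have hmap : ∀ (s : PushoutCocone (show Cat.of ↥(U ∩ V) ⟶ Cat.of ↥U from i₁.toCatHom)
      (show Cat.of ↥(U ∩ V) ⟶ Cat.of ↥V from i₂.toCatHom))
      (x y : P) (h : x ≤ y) (hxu : x ∈ U) (hyu : y ∈ U) (hxv : x ∈ V) (hyv : y ∈ V),
      s.inl.toFunctor.map (homOfLE h : (⟨x, hxu⟩ : ↥U) ⟶ ⟨y, hyu⟩) =
        eqToHom (hobj s x hxu hxv) ≫
          s.inr.toFunctor.map (homOfLE h : (⟨x, hxv⟩ : ↥V) ⟶ ⟨y, hyv⟩) ≫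
          eqToHom (hobj s y hyu hyv).symm := by
    intro s x y h hxu hyu hxv hyv
    have h1 := Functor.congr_hom (congrArg Cat.Hom.toFunctor s.condition)
      (homOfLE h : (⟨x, ⟨hxu, hxv⟩⟩ : ↥(U ∩ V)) ⟶ ⟨y, ⟨hyu, hyv⟩⟩)
    have e2 : s.inl.toFunctor.map (homOfLE h : (⟨x, hxu⟩ : ↥U) ⟶ ⟨y, hyu⟩) =
        ((show Cat.of ↥(U ∩ V) ⟶ Cat.of ↥U from i₁.toCatHom) ≫ s.inl).toFunctor.map
          (homOfLE h : (⟨x, ⟨hxu, hxv⟩⟩ : ↥(U ∩ V)) ⟶ ⟨y, ⟨hyu, hyv⟩⟩) :=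
      congrArg s.inl.toFunctor.map ((homSubsingleton (A := ↥U) _ _).elim _ _)
    have e3 : ((show Cat.of ↥(U ∩ V) ⟶ Cat.of ↥V from i₂.toCatHom) ≫ s.inr).toFunctor.map
          (homOfLE h : (⟨x, ⟨hxu, hxv⟩⟩ : ↥(U ∩ V)) ⟶ ⟨y, ⟨hyu, hyv⟩⟩) =
        s.inr.toFunctor.map (homOfLE h : (⟨x, hxv⟩ : ↥V) ⟶ ⟨y, hyv⟩) :=
      congrArg s.inr.toFunctor.map ((homSubsingleton (A := ↥V) _ _).elim _ _)
    rw [e2, h1, e3]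
    rfl
  exact IsPushout.of_isColimit (PushoutCocone.IsColimit.mk eq
    (fun s => ((descFunctor s.inl.toFunctor s.inr.toFunctor (hobj s) hU hV (hmap s)).toCatHom :
      Cat.of ↥(U ∪ V) ⟶ s.pt))
    (fun s => Cat.ext (desc_fac_left s.inl.toFunctor s.inr.toFunctor (hobj s) hU hV (hmap s)))
    (fun s => Cat.ext (desc_fac_right s.inl.toFunctor s.inr.toFunctor (hobj s) hU hV (hmap s)))
    (fun s m hm₁ hm₂ => Cat.ext (desc_uniq s.inl.toFunctor s.inr.toFunctor (hobj s) hU hV (hmap s)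
      m.toFunctor (congrArg Cat.Hom.toFunctor hm₁) (congrArg Cat.Hom.toFunctor hm₂))))
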